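/- Under the same hypotheses (C compact convex, ‖c_k‖ → ∞, c_k/‖c_k‖ → p, w_k → w̄ ∈ C, ‖c_k - x‖ ≤ r_k ≤ ‖c_k - w_k‖ for all x ∈ C and all k), if a sequence (y_k) satisfies y_k → y and ‖c_k - y_k‖ ≥ r_k for all k, then ⟨y - w̄, p⟩ ≤ 0. -/

import Mathlib

/-- Under the hypotheses of the previous statement, if moreover `y_k → y` and
`‖c_k - y_k‖ ≥ r_k` for all `k`, then `⟨y - w̄, p⟩ ≤ 0`. -/
theorem stmt7 (n : ℕ) (C : Set (EuclideanSpace ℝ (Fin n))) (hC : IsCompact C)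
    (hconv : Convex ℝ C)
    (c w : ℕ → EuclideanSpace ℝ (Fin n)) (r : ℕ → ℝ)
    (p wbar : EuclideanSpace ℝ (Fin n))
    (hc : Filter.Tendsto (fun k => ‖c k‖) Filter.atTop Filter.atTop)
    (hp : Filter.Tendsto (fun k => ‖c k‖⁻¹ • c k) Filter.atTop (nhds p))
    (hw : Filter.Tendsto w Filter.atTop (nhds wbar)) (hwbar : wbar ∈ C)
    (h1 : ∀ k, ∀ x ∈ C, ‖c k - x‖ ≤ r k)
    (h2 : ∀ k, r k ≤ ‖c k - w k‖)
    (y : ℕ → EuclideanSpace ℝ (Fin n)) (ybar : EuclideanSpace ℝ (Fin n))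
    (hy : Filter.Tendsto y Filter.atTop (nhds ybar))
    (h3 : ∀ k, r k ≤ ‖c k - y k‖) :
    (inner ℝ (ybar - wbar) p : ℝ) ≤ 0 := by
  -- key pointwise inequality after dividing by ‖c k‖
  have key : ∀ k, ‖c k‖⁻¹ * ((‖wbar‖^2 - ‖y k‖^2) / 2)
      ≤ (inner ℝ (‖c k‖⁻¹ • c k) (wbar - y k) : ℝ) := by
    intro k
    have hle : ‖c k - wbar‖ ≤ ‖c k - y k‖ := (h1 k wbar hwbar).trans (h3 k)
    have hsq : ‖c k - wbar‖^2 ≤ ‖c k - y k‖^2 := by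
      apply sq_le_sq' <;> nlinarith [norm_nonneg (c k - wbar), norm_nonneg (c k - y k)]
    rw [norm_sub_sq_real, norm_sub_sq_real] at hsq
    have hin : (‖wbar‖^2 - ‖y k‖^2) / 2 ≤ (inner ℝ (c k) (wbar - y k) : ℝ) := by
      rw [inner_sub_right]
      linarith
    rw [real_inner_smul_left]
    have : (0:ℝ) ≤ ‖c k‖⁻¹ := inv_nonneg.mpr (norm_nonneg _)
    exact mul_le_mul_of_nonneg_left hin this
  have hinv : Filter.Tendsto (fun k => ‖c k‖⁻¹) Filter.atTop (nhds 0) :=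
    Filter.Tendsto.inv_tendsto_atTop hc
  have hlhs : Filter.Tendsto (fun k => ‖c k‖⁻¹ * ((‖wbar‖^2 - ‖y k‖^2) / 2))
      Filter.atTop (nhds 0) := by
    have hy2 : Filter.Tendsto (fun k => (‖wbar‖^2 - ‖y k‖^2) / 2) Filter.atTop
        (nhds ((‖wbar‖^2 - ‖ybar‖^2) / 2)) :=
      ((tendsto_const_nhds.sub ((hy.norm).pow 2)).div_const 2)
    simpa using hinv.mul hy2
  have hrhs : Filter.Tendsto (fun k => (inner ℝ (‖c k‖⁻¹ • c k) (wbar - y k) : ℝ))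
      Filter.atTop (nhds (inner ℝ p (wbar - ybar) : ℝ)) :=
    hp.inner (tendsto_const_nhds.sub hy)
  have h0 : (0:ℝ) ≤ (inner ℝ p (wbar - ybar) : ℝ) :=
    le_of_tendsto_of_tendsto' hlhs hrhs key
  rw [real_inner_comm] at h0
  have heq : (inner ℝ (ybar - wbar) p : ℝ) = -(inner ℝ (wbar - ybar) p : ℝ) := by
    rw [← inner_neg_left, neg_sub]
  rw [heq]; linarith
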